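/- Let G be a connected graph (finite, loopless, possibly with multiple edges) with an even number of edges. Then G has an orientation in which every vertex has even out-degree. -/
import Mathlib


/-- A loopless multigraph on vertex type `V` with edge type `E`. -/
structure Multigraph (V : Type) (E : Type) where
  ends : E → Sym2 V
  loopless : ∀ e, ¬ (ends e).IsDiag

namespace Multigraph

variable {V E : Type}

/-- Degree of a vertex. -/
noncomputable def deg (G : Multigraph V E) (v : V) : ℕ :=
  Nat.card {e : E // v ∈ G.ends e}

/-- Degree of a vertex in the spanning subgraph with edge set `H`. -/
noncomputable def degOn (G : Multigraph V E) (H : Set E) (v : V) : ℕ :=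
  Nat.card {e : E // e ∈ H ∧ v ∈ G.ends e}

/-- Degree of `v` in colour `j` under the edge-colouring `c`. -/
noncomputable def degCol {C : Type} (G : Multigraph V E) (c : E → C) (j : C) (v : V) : ℕ :=
  Nat.card {e : E // c e = j ∧ v ∈ G.ends e}

/-- Adjacency using only edges from `F`. -/
def Adj (G : Multigraph V E) (F : Set E) (v w : V) : Prop :=
  ∃ e ∈ F, G.ends e = s(v, w)

/-- The spanning subgraph with edge set `F` is connected (on all of `V`). -/
def ConnectedOn (G : Multigraph V E) (F : Set E) : Prop :=
  ∀ v w : V, Relation.ReflTransGen (G.Adj F) v w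

/-- `G` is connected. -/
def Connected (G : Multigraph V E) : Prop := G.ConnectedOn Set.univ

/-- `G` is `k`-edge-connected: removing fewer than `k` edges leaves it connected. -/
def EdgeConnected (G : Multigraph V E) (k : ℕ) : Prop :=
  ∀ F : Finset E, F.card < k → G.ConnectedOn {e | e ∉ F}

/-- The spanning subgraph with edge set `H` is `k`-edge-connected. -/
def EdgeConnectedOn (G : Multigraph V E) (H : Set E) (k : ℕ) : Prop :=
  ∀ F : Finset E, ↑F ⊆ H → F.card < k → G.ConnectedOn (H \ ↑F)

/-- `S` is the edge set of a spanning tree of `G`. -/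
def IsSpanningTree (G : Multigraph V E) (S : Set E) : Prop :=
  G.ConnectedOn S ∧ Nat.card S + 1 = Nat.card V

/-- `G` is a tree (connected with one fewer edge than vertices). -/
def IsTree (G : Multigraph V E) : Prop :=
  G.Connected ∧ Nat.card E + 1 = Nat.card V

/-- `H` is a homomorphic copy of `G`: it is obtained from `G` by identifying vertices,
keeping all edges (the vertex map is surjective and induces a bijection on edges). -/
def IsHomCopy {V' E' : Type} (G : Multigraph V E) (H : Multigraph V' E') : Prop :=
  ∃ (f : V → V') (g : E ≃ E'), Function.Surjective f ∧
    ∀ e, H.ends (g e) = (G.ends e).map f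

/-- `G` and `H` are isomorphic multigraphs. -/
def IsIsomorphic {V' E' : Type} (G : Multigraph V E) (H : Multigraph V' E') : Prop :=
  ∃ (f : V ≃ V') (g : E ≃ E'), ∀ e, H.ends (g e) = (G.ends e).map f

/-- The edge set `S` of `G` forms a subgraph which is a homomorphic copy of `T`. -/
def IsHomCopyOn {VT ET : Type} (T : Multigraph VT ET) (G : Multigraph V E) (S : Set E) : Prop :=
  ∃ (f : VT → V) (g : ET ≃ S), ∀ e, G.ends (g e) = (T.ends e).map f

/-- The edge set `S` of `G` forms a subgraph isomorphic to `T`. -/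
def IsIsoCopyOn {VT ET : Type} (T : Multigraph VT ET) (G : Multigraph V E) (S : Set E) : Prop :=
  ∃ (f : VT → V) (g : ET ≃ S), Function.Injective f ∧
    ∀ e, G.ends (g e) = (T.ends e).map f

/-- `A`, `B` form a bipartition of `G`. -/
def IsBipartition (G : Multigraph V E) (A B : Set V) : Prop :=
  Disjoint A B ∧ A ∪ B = Set.univ ∧ ∀ e : E, ∃ a ∈ A, ∃ b ∈ B, G.ends e = s(a, b)

/-- A `T*`-decomposition: a partition of the edge set of `G` into homomorphic copies of `T`. -/
def HomCopyDecomposition {VT ET : Type} (T : Multigraph VT ET) (G : Multigraph V E) : Prop :=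
  ∃ P : Set (Set E), Setoid.IsPartition P ∧ ∀ S ∈ P, T.IsHomCopyOn G S

/-- A `T`-decomposition: a partition of the edge set of `G` into copies isomorphic to `T`. -/
def IsoCopyDecomposition {VT ET : Type} (T : Multigraph VT ET) (G : Multigraph V E) : Prop :=
  ∃ P : Set (Set E), Setoid.IsPartition P ∧ ∀ S ∈ P, T.IsIsoCopyOn G S

/-- There is a walk of length `n` from `v` to `w` in `G`. -/
def WalkLen (G : Multigraph V E) (n : ℕ) (v w : V) : Prop :=
  ∃ (p : Fin (n + 1) → V) (e : Fin n → E), p 0 = v ∧ p (Fin.last n) = w ∧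
    ∀ i : Fin n, G.ends (e i) = s(p i.castSucc, p i.succ)

/-- Graph distance. -/
noncomputable def dist (G : Multigraph V E) (v w : V) : ℕ :=
  sInf {n | G.WalkLen n v w}

/-- Diameter of a finite graph. -/
noncomputable def diam (G : Multigraph V E) [Fintype V] : ℕ :=
  Finset.univ.sup fun p : V × V => G.dist p.1 p.2

/-- `G` contains a cycle of length `n`. -/
def HasCycleOfLength (G : Multigraph V E) (n : ℕ) : Prop :=
  2 ≤ n ∧ ∃ (v : ZMod n → V) (e : ZMod n → E), Function.Injective v ∧ Function.Injective e ∧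
    ∀ i, G.ends (e i) = s(v i, v (i + 1))

end Multigraph

section OrientAux

open Multigraph Finset

variable {V E : Type} [Fintype V] [Fintype E]

attribute [local instance] Classical.propDecidable

private lemma zmod2_add_self (z : ZMod 2) : z + z = 0 := by revert z; decide

private lemma zmod2_zero_or_one (z : ZMod 2) : z = 0 ∨ z = 1 := by revert z; decide

/-- Out-degree mod 2 of `v` under orientation `o`. -/
noncomputable def outd (o : E → V × V) (v : V) : ZMod 2 :=
  ∑ e : E, if (o e).1 = v then 1 else 0

/-- `o` is a valid orientation of `G`. -/
def ValidOrient (G : Multigraph V E) (o : E → V × V) : Prop :=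
  ∀ e, G.ends e = s((o e).1, (o e).2)

/-- Reverse the orientation of the single edge `e0`. -/
noncomputable def flipE (o : E → V × V) (e0 : E) : E → V × V :=
  fun e => if e = e0 then ((o e0).2, (o e0).1) else o e

lemma validOrient_flipE {G : Multigraph V E} {o : E → V × V} (ho : ValidOrient G o)
    (e0 : E) : ValidOrient G (flipE o e0) := by
  intro e
  unfold flipE
  by_cases h : e = e0
  · rw [if_pos h, h]
    show G.ends e0 = s((o e0).2, (o e0).1)
    rw [ho e0, Sym2.eq_swap]
  · rw [if_neg h]
    exact ho e

lemma outd_flipE (o : E → V × V) (e0 : E) (v : V) :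
    outd (flipE o e0) v = outd o v + (if (o e0).1 = v then 1 else 0)
      + (if (o e0).2 = v then 1 else 0) := by
  classical
  unfold outd
  rw [← Finset.sum_erase_add _ _ (Finset.mem_univ e0),
    ← Finset.sum_erase_add _ (fun e => if (o e).1 = v then (1 : ZMod 2) else 0)
      (Finset.mem_univ e0)]
  have hs : ∑ e ∈ Finset.univ.erase e0, (if ((flipE o e0 e).1) = v then (1 : ZMod 2) else 0)
      = ∑ e ∈ Finset.univ.erase e0, (if (o e).1 = v then (1 : ZMod 2) else 0) := by
    refine Finset.sum_congr rfl fun e he => ?_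
    have hne : e ≠ e0 := (Finset.mem_erase.mp he).1
    simp [flipE, hne]
  rw [hs]
  have h0 : (flipE o e0 e0).1 = (o e0).2 := by simp [flipE]
  rw [h0]
  linear_combination - zmod2_add_self (if (o e0).1 = v then (1 : ZMod 2) else 0)

lemma move_orient (G : Multigraph V E) {a b : V}
    (h : Relation.ReflTransGen (G.Adj Set.univ) a b) :
    ∀ o : E → V × V, ValidOrient G o → ∃ o', ValidOrient G o' ∧
      ∀ v, outd o' v = outd o v + (if a = v then 1 else 0) + (if b = v then 1 else 0) := by
  induction h using Relation.ReflTransGen.head_induction_on with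
  | refl =>
    intro o ho
    refine ⟨o, ho, fun v => ?_⟩
    linear_combination - zmod2_add_self (if b = v then (1 : ZMod 2) else 0)
  | head hac hcb IH =>
    rename_i a c
    intro o ho
    obtain ⟨e, -, he⟩ := hac
    obtain ⟨o', ho', hout⟩ := IH (flipE o e) (validOrient_flipE ho e)
    refine ⟨o', ho', fun v => ?_⟩
    have hsym : s((o e).1, (o e).2) = s(a, c) := by rw [← ho e, he]
    rw [Sym2.eq_iff] at hsym
    have hflip := outd_flipE o e v
    rcases hsym with ⟨h1, h2⟩ | ⟨h1, h2⟩ <;> rw [h1, h2] at hflip <;>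
      rw [hout v, hflip] <;>
      linear_combination zmod2_add_self (if c = v then (1 : ZMod 2) else 0)

end OrientAux

open Multigraph in
/-- a finite connected multigraph with an even number of edges has an
orientation in which every vertex has even out-degree. -/
theorem orientation_even_outdegrees {V E : Type} [Fintype V] [Fintype E]
    (G : Multigraph V E) (hcon : G.Connected) (heven : 2 ∣ Nat.card E) :
    ∃ o : E → V × V, (∀ e, G.ends e = s((o e).1, (o e).2)) ∧
      ∀ v : V, 2 ∣ Nat.card {e : E // (o e).1 = v} := by
  classical
  -- an initial valid orientation
  have hex : ∀ z : Sym2 V, ∃ p : V × V, z = s(p.1, p.2) := by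
    intro z
    induction z using Sym2.ind with
    | _ x y => exact ⟨(x, y), rfl⟩
  choose rep hrep using fun e => hex (G.ends e)
  -- total out-degree parity is zero
  have hsum : ∀ o : E → V × V, ∑ v : V, outd o v = 0 := by
    intro o
    unfold outd
    rw [Finset.sum_comm]
    have h1 : ∀ e : E, (∑ v : V, if (o e).1 = v then (1 : ZMod 2) else 0) = 1 := by
      intro e
      rw [Finset.sum_ite_eq Finset.univ (o e).1 (fun _ => (1 : ZMod 2))]
      simp
    rw [Finset.sum_congr rfl fun e _ => h1 e, Finset.sum_const, Finset.card_univ,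
      nsmul_eq_mul, mul_one, ZMod.natCast_eq_zero_iff]
    rwa [Nat.card_eq_fintype_card] at heven
  -- parity of outd as a Finset card
  have hbadcard : ∀ o : E → V × V,
      (((Finset.univ.filter fun v => outd o v = 1).card : ZMod 2)) = 0 := by
    intro o
    have : ∑ v : V, outd o v
        = ∑ v : V, (if outd o v = 1 then (1 : ZMod 2) else 0) := by
      refine Finset.sum_congr rfl fun v _ => ?_
      rcases zmod2_zero_or_one (outd o v) with h | h <;> simp [h]
    rw [hsum o] at this
    rw [← Finset.sum_boole, ← this]
  -- main induction: kill all odd-out-degree vertices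
  have main : ∀ n (o : E → V × V), ValidOrient G o →
      (Finset.univ.filter fun v => outd o v = 1).card = n →
      ∃ o', ValidOrient G o' ∧ ∀ v, outd o' v = 0 := by
    intro n
    induction n using Nat.strong_induction_on with
    | _ n IH =>
      intro o ho hcard
      set bad := Finset.univ.filter fun v => outd o v = 1 with hbaddef
      by_cases hb : bad = ∅
      · refine ⟨o, ho, fun v => ?_⟩
        rcases zmod2_zero_or_one (outd o v) with h | h
        · exact h
        · exfalso
          have : v ∈ bad := by simp [hbaddef, h]
          simp [hb] at this
      · obtain ⟨a, ha⟩ := Finset.nonempty_iff_ne_empty.mpr hb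
        have hn2 : 2 ∣ n := by
          have := hbadcard o
          rw [← hbaddef, hcard] at this
          exact (ZMod.natCast_eq_zero_iff n 2).mp this
        have hn1 : 1 ≤ n := by
          rw [← hcard]
          exact Finset.card_pos.mpr ⟨a, ha⟩
        have hcer : (bad.erase a).card = n - 1 := by
          rw [Finset.card_erase_of_mem ha, hcard]
        obtain ⟨b, hbmem⟩ : (bad.erase a).Nonempty := by
          rw [← Finset.card_pos, hcer]; omega
        obtain ⟨hba, hbbad⟩ := Finset.mem_erase.mp hbmem
        obtain ⟨o1, ho1, hout⟩ := move_orient G (hcon a b) o ho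
        have habad : outd o a = 1 := by
          simpa [hbaddef] using ha
        have hbbad' : outd o b = 1 := by
          simpa [hbaddef] using hbbad
        have hbad1 : (Finset.univ.filter fun v => outd o1 v = 1)
            = (bad.erase a).erase b := by
          ext v
          simp only [Finset.mem_filter, Finset.mem_univ, true_and, Finset.mem_erase,
            hbaddef]
          constructor
          · intro hv
            rw [hout v] at hv
            by_cases hva : v = a
            · exfalso
              rw [hva, if_pos rfl, if_neg hba, habad] at hv
              exact absurd hv (by decide)
            · by_cases hvb : v = b
              · exfalso
                rw [hvb, if_neg (fun h => hba h.symm), if_pos rfl, hbbad'] at hv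
                exact absurd hv (by decide)
              · refine ⟨hvb, hva, ?_⟩
                rwa [if_neg (fun h => hva h.symm),
                  if_neg (fun h => hvb h.symm), add_zero, add_zero] at hv
          · rintro ⟨hvb, hva, hv⟩
            rw [hout v, if_neg (fun h => hva h.symm), if_neg (fun h => hvb h.symm),
              add_zero, add_zero]
            exact hv
        have hlt : ((Finset.univ.filter fun v => outd o1 v = 1)).card < n := by
          rw [hbad1]
          calc ((bad.erase a).erase b).card ≤ (bad.erase a).card :=
                Finset.card_erase_le
            _ = n - 1 := hcer
            _ < n := by omega
        exact IH _ hlt o1 ho1 rfl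
  obtain ⟨o', ho', hzero⟩ := main _ rep (fun e => hrep e) rfl
  refine ⟨o', ho', fun v => ?_⟩
  have hcount : Nat.card {e : E // (o' e).1 = v}
      = (Finset.univ.filter fun e => (o' e).1 = v).card := by
    rw [Nat.card_eq_fintype_card, Fintype.card_subtype]
  rw [hcount, ← ZMod.natCast_eq_zero_iff]
  have : ((Finset.univ.filter fun e => (o' e).1 = v).card : ZMod 2) = outd o' v := by
    rw [← Finset.sum_boole]
    rfl
  rw [this, hzero v]
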